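/- Let K be a field of characteristic 3. The maps g: (X,Y,Z) ↦ (X+1, Y, Z+Y) and h: (X,Y,Z) ↦ (X, Y−1, Z+X) preserve the affine variety in A³ defined by (X³−X)(Y³−Y) − 1 = 0 and Z³ − Z + X³Y − XY³ = 0, and the group of transformations of A³ generated by g and h is non-abelian of order 27 and exponent 3 (hence isomorphic to UT(3,3)). -/

import Mathlib

/-- The unipotent upper-triangular `3 × 3` matrix with strictly-upper entries `a b c`. -/
def UTMat (a b c : ZMod 3) : Matrix (Fin 3) (Fin 3) (ZMod 3) :=
  !![1, a, b; 0, 1, c; 0, 0, 1]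

/-- `UT(3,3)`: the group of upper-triangular unipotent `3 × 3` matrices over `𝔽₃`. -/
def UT33 : Type :=
  { M : Matrix (Fin 3) (Fin 3) (ZMod 3) // ∃ a b c : ZMod 3, M = UTMat a b c }

lemma UTMat_mul (a b c a' b' c' : ZMod 3) :
    UTMat a b c * UTMat a' b' c' = UTMat (a + a') (b + (b' + a * c')) (c + c') := by
  simp only [UTMat, Matrix.mul_fin_three]
  congr 1 <;> ring

lemma UTMat_one : UTMat 0 0 0 = 1 := by
  simp [UTMat, Matrix.one_fin_three]

instance : Mul UT33 :=
  ⟨fun M N => ⟨M.1 * N.1, by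
    obtain ⟨a, b, c, hM⟩ := M.2
    obtain ⟨a', b', c', hN⟩ := N.2
    exact ⟨a + a', b + (b' + a * c'), c + c', by rw [hM, hN, UTMat_mul]⟩⟩⟩

instance : One UT33 := ⟨⟨1, 0, 0, 0, UTMat_one.symm⟩⟩

instance : Inv UT33 :=
  ⟨fun M => ⟨UTMat (-(M.1 0 1)) (M.1 0 1 * M.1 1 2 - M.1 0 2) (-(M.1 1 2)), _, _, _, rfl⟩⟩

instance : Group UT33 where
  mul_assoc a b c := Subtype.ext (mul_assoc a.1 b.1 c.1)
  one_mul a := Subtype.ext (one_mul a.1)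
  mul_one a := Subtype.ext (mul_one a.1)
  inv_mul_cancel M := by
    obtain ⟨Mv, hM⟩ := M
    obtain ⟨a, b, c, rfl⟩ := hM
    refine Subtype.ext ?_
    show UTMat (-(UTMat a b c 0 1)) (UTMat a b c 0 1 * UTMat a b c 1 2 - UTMat a b c 0 2)
        (-(UTMat a b c 1 2)) * UTMat a b c = 1
    have h01 : UTMat a b c 0 1 = a := by simp [UTMat]
    have h12 : UTMat a b c 1 2 = c := by simp [UTMat]
    have h02 : UTMat a b c 0 2 = b := by simp [UTMat]
    rw [h01, h12, h02, UTMat_mul, ← UTMat_one]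
    congr 1 <;> ring

/-- The affine variety in `𝔸³` cut out by `(X³-X)(Y³-Y) - 1 = 0` and
`Z³ - Z + X³Y - XY³ = 0`. -/
def curveV (K : Type*) [Field K] : Set (K × K × K) :=
  {P | (P.1 ^ 3 - P.1) * (P.2.1 ^ 3 - P.2.1) - 1 = 0 ∧
       P.2.2 ^ 3 - P.2.2 + P.1 ^ 3 * P.2.1 - P.1 * P.2.1 ^ 3 = 0}

/-- `g : (X,Y,Z) ↦ (X+1, Y, Z+Y)` as a permutation of `𝔸³`. -/
def gPerm (K : Type*) [Field K] : Equiv.Perm (K × K × K) where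
  toFun P := (P.1 + 1, P.2.1, P.2.2 + P.2.1)
  invFun P := (P.1 - 1, P.2.1, P.2.2 - P.2.1)
  left_inv P := by obtain ⟨x, y, z⟩ := P; simp only [Prod.mk.injEq]
                   exact ⟨by ring, trivial, by ring⟩
  right_inv P := by obtain ⟨x, y, z⟩ := P; simp only [Prod.mk.injEq]
                    exact ⟨by ring, trivial, by ring⟩

/-- `h : (X,Y,Z) ↦ (X, Y-1, Z+X)` as a permutation of `𝔸³`. -/
def hPerm (K : Type*) [Field K] : Equiv.Perm (K × K × K) where
  toFun P := (P.1, P.2.1 - 1, P.2.2 + P.1)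
  invFun P := (P.1, P.2.1 + 1, P.2.2 - P.1)
  left_inv P := by obtain ⟨x, y, z⟩ := P; simp only [Prod.mk.injEq]
                   exact ⟨trivial, by ring, by ring⟩
  right_inv P := by obtain ⟨x, y, z⟩ := P; simp only [Prod.mk.injEq]
                    exact ⟨trivial, by ring, by ring⟩

/-! ### Auxiliary material -/

section Aux

lemma UTMat_01 (a b c : ZMod 3) : UTMat a b c 0 1 = a := rfl
lemma UTMat_02 (a b c : ZMod 3) : UTMat a b c 0 2 = b := rfl
lemma UTMat_12 (a b c : ZMod 3) : UTMat a b c 1 2 = c := rfl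

lemma UT33_mul_val (M N : UT33) : (M * N).1 = M.1 * N.1 := rfl
lemma UT33_one_val : (1 : UT33).1 = 1 := rfl

lemma UTMat_injEq {a b c a' b' c' : ZMod 3} (h : UTMat a b c = UTMat a' b' c') :
    a = a' ∧ b = b' ∧ c = c' := by
  refine ⟨?_, ?_, ?_⟩
  · have := congrArg (fun m => m 0 1) h; simpa [UTMat_01] using this
  · have := congrArg (fun m => m 0 2) h; simpa [UTMat_02] using this
  · have := congrArg (fun m => m 1 2) h; simpa [UTMat_12] using this

variable (K : Type*) [Field K] [CharP K 3]

/-- Cast from `𝔽₃` to `K`. -/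
def ι : ZMod 3 →+* K := ZMod.castHom (dvd_refl 3) K

/-- The basic Heisenberg-type affine transformation of `𝔸³`. -/
def heis (a b c : ZMod 3) : Equiv.Perm (K × K × K) where
  toFun P := (P.1 + ι K a, P.2.1 - ι K b,
      P.2.2 + ι K b * P.1 + ι K a * P.2.1 + ι K c)
  invFun P := (P.1 - ι K a, P.2.1 + ι K b,
      P.2.2 - ι K b * (P.1 - ι K a) - ι K a * (P.2.1 + ι K b) - ι K c)
  left_inv P := by obtain ⟨x, y, z⟩ := P; simp only [Prod.mk.injEq]
                   exact ⟨by ring, by ring, by ring⟩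
  right_inv P := by obtain ⟨x, y, z⟩ := P; simp only [Prod.mk.injEq]
                    exact ⟨by ring, by ring, by ring⟩

lemma heis_apply (a b c : ZMod 3) (P : K × K × K) :
    heis K a b c P = (P.1 + ι K a, P.2.1 - ι K b,
      P.2.2 + ι K b * P.1 + ι K a * P.2.1 + ι K c) := rfl

lemma heis_mul (a b c a' b' c' : ZMod 3) :
    heis K a b c * heis K a' b' c'
      = heis K (a + a') (b + b') (c + c' + a' * b - a * b') := by
  apply Equiv.ext
  rintro ⟨x, y, z⟩
  simp only [Equiv.Perm.mul_apply, heis_apply, map_add, map_sub, map_mul, Prod.mk.injEq]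
  exact ⟨by ring, by ring, by ring⟩

lemma heis_one : heis K 0 0 0 = 1 := by
  apply Equiv.ext
  rintro ⟨x, y, z⟩
  simp [heis_apply, map_zero]

lemma heis_eq_one {a b c : ZMod 3} (h : heis K a b c = 1) : a = 0 ∧ b = 0 ∧ c = 0 := by
  have h0 := congrArg (fun f : Equiv.Perm (K × K × K) => f (0, 0, 0)) h
  simp only [heis_apply, Equiv.Perm.one_apply, Prod.mk.injEq] at h0
  obtain ⟨h1, h2, h3⟩ := h0
  have inj := ZMod.castHom_injective K (n := 3)
  refine ⟨inj ?_, inj ?_, inj ?_⟩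
  · rw [map_zero]; show ι K a = 0; linear_combination h1
  · rw [map_zero]; show ι K b = 0; linear_combination -h2
  · rw [map_zero]; show ι K c = 0; linear_combination h3

/-- The monoid hom from `UT(3,3)` to permutations of `𝔸³`. -/
def psi : UT33 →* Equiv.Perm (K × K × K) where
  toFun M := heis K (M.1 0 1) (M.1 1 2) (M.1 0 2 + M.1 0 1 * M.1 1 2)
  map_one' := by
    show heis K ((1 : UT33).1 0 1) ((1 : UT33).1 1 2)
        ((1 : UT33).1 0 2 + (1 : UT33).1 0 1 * (1 : UT33).1 1 2) = 1
    rw [show (1 : UT33).1 = UTMat 0 0 0 from UTMat_one.symm]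
    rw [UTMat_01, UTMat_02, UTMat_12]
    rw [show (0 : ZMod 3) + 0 * 0 = 0 by ring, heis_one]
  map_mul' M N := by
    obtain ⟨a, b, c, hM⟩ := M.2
    obtain ⟨a', b', c', hN⟩ := N.2
    show heis K ((M.1 * N.1) 0 1) ((M.1 * N.1) 1 2)
        ((M.1 * N.1) 0 2 + (M.1 * N.1) 0 1 * (M.1 * N.1) 1 2)
      = heis K (M.1 0 1) (M.1 1 2) (M.1 0 2 + M.1 0 1 * M.1 1 2)
        * heis K (N.1 0 1) (N.1 1 2) (N.1 0 2 + N.1 0 1 * N.1 1 2)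
    rw [hM, hN, UTMat_mul, UTMat_01, UTMat_02, UTMat_12,
      UTMat_01, UTMat_02, UTMat_12, UTMat_01, UTMat_02, UTMat_12, heis_mul]
    congr 1
    have h3 : (3 : ZMod 3) = 0 := rfl
    linear_combination a * c' * h3

lemma psi_injective : Function.Injective (psi K) := by
  rw [injective_iff_map_eq_one]
  rintro ⟨Mv, hMv⟩ h
  obtain ⟨a, b, c, rfl⟩ := hMv
  have h' : heis K a c (b + a * c) = 1 := by
    simpa only [psi, MonoidHom.coe_mk, OneHom.coe_mk, UTMat_01, UTMat_02, UTMat_12] using h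
  obtain ⟨ha, hc, hb⟩ := heis_eq_one K h'
  have hb' : b = 0 := by rw [ha] at hb; linear_combination hb
  refine Subtype.ext ?_
  rw [ha, hb', hc]; exact UTMat_one

def gU : UT33 := ⟨UTMat 1 0 0, 1, 0, 0, rfl⟩
def hU : UT33 := ⟨UTMat 0 0 1, 0, 0, 1, rfl⟩
def kU : UT33 := ⟨UTMat 0 1 0, 0, 1, 0, rfl⟩

lemma psi_gU : psi K gU = gPerm K := by
  apply Equiv.ext
  rintro ⟨x, y, z⟩
  show heis K 1 0 (0 + 1 * 0) (x, y, z) = _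
  rw [show (0 : ZMod 3) + 1 * 0 = 0 by ring, heis_apply]
  show _ = (x + 1, y, z + y)
  simp only [map_zero, map_one, Prod.mk.injEq]
  refine ⟨?_, ?_, ?_⟩ <;> first | trivial | ring

lemma psi_hU : psi K hU = hPerm K := by
  apply Equiv.ext
  rintro ⟨x, y, z⟩
  show heis K 0 1 (0 + 0 * 1) (x, y, z) = _
  rw [show (0 : ZMod 3) + 0 * 1 = 0 by ring, heis_apply]
  show _ = (x, y - 1, z + x)
  simp only [map_zero, map_one, Prod.mk.injEq]
  refine ⟨?_, ?_, ?_⟩ <;> first | trivial | ring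

lemma gU_pow (n : ℕ) : (gU ^ n).1 = UTMat (n : ZMod 3) 0 0 := by
  induction n with
  | zero => rw [pow_zero, UT33_one_val, Nat.cast_zero, UTMat_one]
  | succ n ih =>
      rw [pow_succ, UT33_mul_val, ih]
      show UTMat _ 0 0 * UTMat 1 0 0 = _
      rw [UTMat_mul]; congr 1 <;> push_cast <;> ring

lemma hU_pow (n : ℕ) : (hU ^ n).1 = UTMat 0 0 (n : ZMod 3) := by
  induction n with
  | zero => rw [pow_zero, UT33_one_val, Nat.cast_zero, UTMat_one]
  | succ n ih =>
      rw [pow_succ, UT33_mul_val, ih]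
      show UTMat 0 0 _ * UTMat 0 0 1 = _
      rw [UTMat_mul]; congr 1 <;> push_cast <;> ring

lemma kU_pow (n : ℕ) : (kU ^ n).1 = UTMat 0 (n : ZMod 3) 0 := by
  induction n with
  | zero => rw [pow_zero, UT33_one_val, Nat.cast_zero, UTMat_one]
  | succ n ih =>
      rw [pow_succ, UT33_mul_val, ih]
      show UTMat 0 _ 0 * UTMat 0 1 0 = _
      rw [UTMat_mul]; congr 1 <;> push_cast <;> ring

lemma kU_eq : kU = gU * hU * gU * gU * hU * hU := by
  refine Subtype.ext ?_
  show UTMat 0 1 0 = UTMat 1 0 0 * UTMat 0 0 1 * UTMat 1 0 0 * UTMat 1 0 0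
      * UTMat 0 0 1 * UTMat 0 0 1
  rw [UTMat_mul, UTMat_mul, UTMat_mul, UTMat_mul, UTMat_mul]
  congr 1 <;> decide

lemma closure_UT33 : Subgroup.closure ({gU, hU} : Set UT33) = ⊤ := by
  rw [eq_top_iff]
  rintro M -
  have hg : gU ∈ Subgroup.closure ({gU, hU} : Set UT33) :=
    Subgroup.subset_closure (by left; rfl)
  have hh : hU ∈ Subgroup.closure ({gU, hU} : Set UT33) :=
    Subgroup.subset_closure (by right; rfl)
  have hk : kU ∈ Subgroup.closure ({gU, hU} : Set UT33) := by
    rw [kU_eq]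
    exact mul_mem (mul_mem (mul_mem (mul_mem (mul_mem hg hh) hg) hg) hh) hh
  obtain ⟨Mv, hMv⟩ := M
  obtain ⟨a, b, c, rfl⟩ := hMv
  have key : (⟨UTMat a b c, a, b, c, rfl⟩ : UT33)
      = gU ^ a.val * kU ^ (b - a * c).val * hU ^ c.val := by
    refine Subtype.ext ?_
    rw [UT33_mul_val, UT33_mul_val, gU_pow, kU_pow, hU_pow,
      ZMod.natCast_rightInverse a, ZMod.natCast_rightInverse (b - a * c),
      ZMod.natCast_rightInverse c, UTMat_mul, UTMat_mul]
    congr 1 <;> ring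
  rw [key]
  exact mul_mem (mul_mem (pow_mem hg _) (pow_mem hk _)) (pow_mem hh _)

lemma psi_range : (psi K).range = Subgroup.closure {gPerm K, hPerm K} := by
  rw [MonoidHom.range_eq_map, ← closure_UT33, MonoidHom.map_closure]
  congr 1
  rw [Set.image_insert_eq, Set.image_singleton, psi_gU, psi_hU]

lemma UT33_cube (M : UT33) : M ^ 3 = 1 := by
  rw [pow_succ, pow_succ, pow_one]
  obtain ⟨Mv, hMv⟩ := M
  obtain ⟨a, b, c, rfl⟩ := hMv
  refine Subtype.ext ?_
  show UTMat a b c * UTMat a b c * UTMat a b c = 1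
  have h3 : (3 : ZMod 3) = 0 := by decide
  rw [UTMat_mul, UTMat_mul,
    show a + a + a = 0 by linear_combination a * h3,
    show b + (b + a * c) + (b + (a + a) * c) = 0 by linear_combination (b + a * c) * h3,
    show c + c + c = 0 by linear_combination c * h3, UTMat_one]

lemma gU_ne_one : gU ≠ (1 : UT33) := by
  intro h
  have h' : UTMat 1 0 0 = UTMat 0 0 0 := by
    rw [UTMat_one]; exact congrArg Subtype.val h
  exact one_ne_zero (UTMat_injEq h').1

lemma UT33_exponent : Monoid.exponent UT33 = 3 := by
  haveI : Fact (Nat.Prime 3) := ⟨by norm_num⟩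
  refine Nat.dvd_antisymm ?_ ?_
  · exact Monoid.exponent_dvd_of_forall_pow_eq_one UT33_cube
  · have h := orderOf_eq_prime (UT33_cube gU) gU_ne_one
    exact h ▸ Monoid.order_dvd_exponent gU

/-- `UT33` is in bijection with triples. -/
def UT33Equiv : UT33 ≃ (ZMod 3 × ZMod 3 × ZMod 3) where
  toFun M := (M.1 0 1, M.1 0 2, M.1 1 2)
  invFun x := ⟨UTMat x.1 x.2.1 x.2.2, x.1, x.2.1, x.2.2, rfl⟩
  left_inv M := by
    obtain ⟨Mv, hMv⟩ := M
    obtain ⟨a, b, c, rfl⟩ := hMv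
    exact Subtype.ext rfl
  right_inv x := rfl

lemma UT33_card : Nat.card UT33 = 27 := by
  rw [Nat.card_congr UT33Equiv]
  simp [Nat.card_eq_fintype_card]

end Aux

theorem stmt_13 (K : Type*) [Field K] [CharP K 3] :
    (∀ P ∈ curveV K, gPerm K P ∈ curveV K) ∧
    (∀ P ∈ curveV K, hPerm K P ∈ curveV K) ∧
    (¬ ∀ a b : Subgroup.closure {gPerm K, hPerm K}, a * b = b * a) ∧
    Nat.card (Subgroup.closure {gPerm K, hPerm K}) = 27 ∧
    Monoid.exponent (Subgroup.closure {gPerm K, hPerm K}) = 3 ∧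
    Nonempty ((Subgroup.closure {gPerm K, hPerm K}) ≃* UT33) := by
  have h3 : (3 : K) = 0 := by exact_mod_cast CharP.cast_eq_zero K 3
  have e : (Subgroup.closure {gPerm K, hPerm K}) ≃* UT33 :=
    (MulEquiv.subgroupCongr (psi_range K).symm).trans
      (MonoidHom.ofInjective (psi_injective K)).symm
  refine ⟨?_, ?_, ?_, ?_, ?_, ⟨e⟩⟩
  · rintro ⟨x, y, z⟩ ⟨h1, h2⟩
    simp only [curveV, Set.mem_setOf_eq] at h1 h2 ⊢
    simp only [gPerm, Equiv.coe_fn_mk]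
    constructor
    · linear_combination h1 + (x ^ 2 + x) * (y ^ 3 - y) * h3
    · linear_combination h2 + (z ^ 2 * y + z * y ^ 2 + x ^ 2 * y + x * y) * h3
  · rintro ⟨x, y, z⟩ ⟨h1, h2⟩
    simp only [curveV, Set.mem_setOf_eq] at h1 h2 ⊢
    simp only [hPerm, Equiv.coe_fn_mk]
    constructor
    · linear_combination h1 + (x ^ 3 - x) * (y - y ^ 2) * h3
    · linear_combination h2 + (z ^ 2 * x + z * x ^ 2 + x * y ^ 2 - x * y) * h3
  · intro hcomm
    have hg : gPerm K ∈ Subgroup.closure {gPerm K, hPerm K} :=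
      Subgroup.subset_closure (by left; rfl)
    have hh : hPerm K ∈ Subgroup.closure {gPerm K, hPerm K} :=
      Subgroup.subset_closure (by right; rfl)
    have h := hcomm ⟨gPerm K, hg⟩ ⟨hPerm K, hh⟩
    have h2 : gPerm K * hPerm K = hPerm K * gPerm K := Subtype.ext_iff.mp h
    have h0 := congrArg (fun f : Equiv.Perm (K × K × K) => f ((0 : K), (0 : K), (0 : K))) h2
    simp only [Equiv.Perm.mul_apply, gPerm, hPerm, Equiv.coe_fn_mk, Prod.mk.injEq] at h0
    obtain ⟨-, -, hz⟩ := h0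
    exact one_ne_zero (by linear_combination h3 + hz : (1 : K) = 0)
  · rw [Nat.card_congr e.toEquiv, UT33_card]
  · rw [Monoid.exponent_eq_of_mulEquiv e, UT33_exponent]
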